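/- Let A be a proper assembly (possibly with unoriented or semi-oriented points) such that every scaffold participates in at most two assembly points of A, and whenever a scaffold participates in two points, those two points are non-conflicting or semi-conflicting (i.e., they do not use the same fixed extremity of the shared scaffold when both orientations are forced). Then A admits a non-conflicting realization: there is an assignment of an orientation (Bool) to every scaffold, consistent with all orientations already specified in A, such that the resulting set of oriented assembly points uses each scaffold extremity at most once. -/
import Mathlib


/-- An assembly point: two scaffolds with partial orientation data
(`none` = unoriented, `some b` = oriented, `true` = forward). -/
structure APoint (S : Type) where
  s1 : S
  s2 : S
  o1 : Option Bool
  o2 : Option Bool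
deriving DecidableEq

/-- A global orientation `σ` extends (is consistent with) the partial data of `p`. -/
def APoint.extends' {S : Type} (σ : S → Bool) (p : APoint S) : Prop :=
  (∀ b, p.o1 = some b → σ p.s1 = b) ∧ (∀ b, p.o2 = some b → σ p.s2 = b)

/-- The extremity of its left scaffold used by a point realized via `σ`
(head `(s, true)` if `s` is forward). -/
def APoint.usedL {S : Type} (σ : S → Bool) (p : APoint S) : S × Bool := (p.s1, σ p.s1)

/-- The extremity of its right scaffold used by a point realized via `σ`
(tail `(s, false)` if `s` is forward). -/
def APoint.usedR {S : Type} (σ : S → Bool) (p : APoint S) : S × Bool := (p.s2, !σ p.s2)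

/-- Two realized points use disjoint sets of extremities (are non-conflicting). -/
def APoint.disj {S : Type} (τ τ' : S → Bool) (p q : APoint S) : Prop :=
  p.usedL τ ≠ q.usedL τ' ∧ p.usedL τ ≠ q.usedR τ' ∧
  p.usedR τ ≠ q.usedL τ' ∧ p.usedR τ ≠ q.usedR τ'

/-- `σ` is a non-conflicting realization of the assembly `A`: it extends the partial
orientation data of every point, and every scaffold extremity is used at most once. -/
def NCR {S : Type} (A : Finset (APoint S)) (σ : S → Bool) : Prop :=
  (∀ p ∈ A, p.extends' σ) ∧
  (∀ p ∈ A, p.usedL σ ≠ p.usedR σ) ∧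
  (∀ p ∈ A, ∀ q ∈ A, p ≠ q → APoint.disj σ σ p q)

/-- Orientation `b` of scaffold `s` is allowed by the partial data of point `p`. -/
def allowedOri {S : Type} (p : APoint S) (s : S) (b : Bool) : Prop :=
  (p.s1 = s → ∀ c, p.o1 = some c → b = c) ∧ (p.s2 = s → ∀ c, p.o2 = some c → b = c)

/-- The extremity side of scaffold `s` used by point `p` when `s` has orientation `b`. -/
def extOf {S : Type} [DecidableEq S] (p : APoint S) (s : S) (b : Bool) : Bool :=
  if p.s1 = s then b else !b

/-- a proper assembly in which every scaffold participates in at most two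
points, and every two points sharing a scaffold are non-conflicting or semi-conflicting
(some common allowed orientation of the shared scaffold makes them use distinct
extremities of it), admits a non-conflicting realization. -/
theorem exists_nonconflicting_realization {S : Type} [Fintype S] [DecidableEq S]
    (A : Finset (APoint S))
    (hss : ∀ p ∈ A, p.s1 ≠ p.s2)
    (hdeg : ∀ s : S, (A.filter (fun p => p.s1 = s ∨ p.s2 = s)).card ≤ 2)
    (hpair : ∀ p ∈ A, ∀ q ∈ A, p ≠ q → ∀ s : S,
      (p.s1 = s ∨ p.s2 = s) → (q.s1 = s ∨ q.s2 = s) →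
      ∃ b : Bool, allowedOri p s b ∧ allowedOri q s b ∧ extOf p s b ≠ extOf q s b) :
    ∃ σ : S → Bool, NCR A σ := by

  classical
  -- Key: for each scaffold, there is an orientation allowed by all points touching it.
  have key : ∀ s : S, ∃ b : Bool, ∀ p ∈ A, (p.s1 = s ∨ p.s2 = s) → allowedOri p s b := by
    intro s
    by_cases h2 : ∃ p ∈ A, ∃ q ∈ A, p ≠ q ∧ (p.s1 = s ∨ p.s2 = s) ∧ (q.s1 = s ∨ q.s2 = s)
    · obtain ⟨p, hp, q, hq, hpq, hps, hqs⟩ := h2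
      obtain ⟨b, hbp, hbq, -⟩ := hpair p hp q hq hpq s hps hqs
      refine ⟨b, fun r hr hrs => ?_⟩
      rcases eq_or_ne r p with rfl | hrp
      · exact hbp
      rcases eq_or_ne r q with rfl | hrq
      · exact hbq
      exfalso
      have hsub : ({p, q, r} : Finset (APoint S)) ⊆
          A.filter (fun x => x.s1 = s ∨ x.s2 = s) := by
        intro x hx
        simp only [Finset.mem_insert, Finset.mem_singleton] at hx
        rcases hx with rfl | rfl | rfl <;> simp [Finset.mem_filter, hp, hq, hr, hps, hqs, hrs]
      have hcard : ({p, q, r} : Finset (APoint S)).card = 3 := by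
        rw [Finset.card_insert_of_notMem, Finset.card_insert_of_notMem,
          Finset.card_singleton]
        · simp [hrq.symm]
        · simp [hpq, hrp.symm]
      have := Finset.card_le_card hsub
      rw [hcard] at this
      have := hdeg s
      omega
    · push_neg at h2
      by_cases h1 : ∃ p ∈ A, p.s1 = s ∨ p.s2 = s
      · obtain ⟨p, hp, hps⟩ := h1
        refine ⟨if p.s1 = s then p.o1.getD true else p.o2.getD true, fun r hr hrs => ?_⟩
        have hrp : r = p := by
          by_contra hne
          exact hps.elim (h2 r hr p hp hne hrs).1 (h2 r hr p hp hne hrs).2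
        subst hrp
        constructor
        · intro h1' c hc
          rw [if_pos h1', hc]
          rfl
        · intro h2' c hc
          have hns : r.s1 ≠ s := fun h => hss r hr (h.trans h2'.symm)
          rw [if_neg hns, hc]
          rfl
      · exact ⟨true, fun p hp hps => absurd ⟨p, hp, hps⟩ h1⟩
  choose σ hσ using key
  -- No two distinct points of A share the same side of a scaffold.
  have noshare : ∀ p ∈ A, ∀ q ∈ A, p ≠ q → p.s1 ≠ q.s1 ∧ p.s2 ≠ q.s2 := by
    intro p hp q hq hpq
    constructor
    · intro h
      obtain ⟨b, -, -, hb⟩ := hpair p hp q hq hpq q.s1 (Or.inl h) (Or.inl rfl)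
      exact hb (by simp [extOf, h])
    · intro h
      obtain ⟨b, -, -, hb⟩ := hpair p hp q hq hpq q.s2 (Or.inr h) (Or.inr rfl)
      have h1 : p.s1 ≠ q.s2 := h ▸ hss p hp
      have h2 : q.s1 ≠ q.s2 := hss q hq
      exact hb (by simp [extOf, h1, h2])
  refine ⟨σ, ?_, ?_, ?_⟩
  · intro p hp
    exact ⟨fun b hb => (hσ p.s1 p hp (Or.inl rfl)).1 rfl b hb,
      fun b hb => (hσ p.s2 p hp (Or.inr rfl)).2 rfl b hb⟩
  · intro p hp h
    exact hss p hp (congrArg Prod.fst h)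
  · intro p hp q hq hpq
    obtain ⟨h1, h2⟩ := noshare p hp q hq hpq
    refine ⟨fun h => h1 (congrArg Prod.fst h), ?_, ?_, fun h => h2 (congrArg Prod.fst h)⟩
    · intro h
      have hf : p.s1 = q.s2 := congrArg Prod.fst h
      have hs : σ p.s1 = !σ q.s2 := congrArg Prod.snd h
      rw [hf] at hs
      simp at hs
    · intro h
      have hf : p.s2 = q.s1 := congrArg Prod.fst h
      have hs := congrArg Prod.snd h
      simp only [APoint.usedR, APoint.usedL, hf] at hs
      simp at hs
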